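/- Let (X, d) be a metric space and let u : X → ℝ be a Lipschitz function. Then the lower pointwise Lipschitz constant lip u : X → [0, +∞] and the upper pointwise Lipschitz constant Lip u : X → [0, +∞] are Borel measurable functions. -/

import Mathlib

open MeasureTheory Filter Metric Set Topology

/-- The lower pointwise Lipschitz constant
`lip u (x) = liminf_{r → 0+} sup_{y ∈ B_r(x)} |u y - u x| / r`. -/
noncomputable def lipLower {X : Type*} [MetricSpace X] (u : X → ℝ) (x : X) : ℝ :=
  Filter.liminf (fun r : ℝ => ⨆ y ∈ Metric.ball x r, |u y - u x| / r) (𝓝[>] (0 : ℝ))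

/-- The upper pointwise Lipschitz constant
`Lip u (x) = limsup_{r → 0+} sup_{y ∈ B_r(x)} |u y - u x| / r`. -/
noncomputable def lipUpper {X : Type*} [MetricSpace X] (u : X → ℝ) (x : X) : ℝ :=
  Filter.limsup (fun r : ℝ => ⨆ y ∈ Metric.ball x r, |u y - u x| / r) (𝓝[>] (0 : ℝ))

/-- The set `E_{λ,u} = {(x,y) : x ≠ y, |u x - u y| ≥ λ d(x,y)^{N/p+1}}`. -/
def BVYset {X : Type*} [MetricSpace X] (u : X → ℝ) (N p lam : ℝ) : Set (X × X) :=
  {q : X × X | q.1 ≠ q.2 ∧ lam * dist q.1 q.2 ^ (N / p + 1) ≤ |u q.1 - u q.2|}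

namespace LipAux

variable {X : Type*} [MetricSpace X]

/-- The difference quotient sup at scale `r`. -/
noncomputable def g (u : X → ℝ) (r : ℝ) (x : X) : ℝ :=
  ⨆ y ∈ Metric.ball x r, |u y - u x| / r

variable {u : X → ℝ} {L : NNReal} {r ε a : ℝ} {x : X}

lemma term_nonneg (hr : 0 < r) (y : X) :
    (0:ℝ) ≤ ⨆ _ : y ∈ Metric.ball x r, |u y - u x| / r :=
  Real.iSup_nonneg fun _ => div_nonneg (abs_nonneg _) hr.le

lemma g_nonneg (hr : 0 < r) : 0 ≤ g u r x :=
  Real.iSup_nonneg fun y => term_nonneg hr y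

lemma term_le (hL : LipschitzWith L u) (hr : 0 < r) (y : X) :
    (⨆ _ : y ∈ Metric.ball x r, |u y - u x| / r) ≤ (L : ℝ) := by
  refine Real.iSup_le (fun hy => ?_) L.coe_nonneg
  rw [div_le_iff₀ hr]
  calc |u y - u x| = dist (u y) (u x) := (Real.dist_eq _ _).symm
    _ ≤ (L : ℝ) * dist y x := hL.dist_le_mul y x
    _ ≤ (L : ℝ) * r := by
        have := (mem_ball.mp hy).le
        exact mul_le_mul_of_nonneg_left this L.coe_nonneg

lemma g_le (hL : LipschitzWith L u) (hr : 0 < r) : g u r x ≤ (L : ℝ) :=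
  Real.iSup_le (fun y => term_le hL hr y) L.coe_nonneg

lemma le_g (hL : LipschitzWith L u) (hr : 0 < r) {y : X} (hy : y ∈ Metric.ball x r) :
    |u y - u x| / r ≤ g u r x := by
  have hb : BddAbove (Set.range fun y => ⨆ _ : y ∈ Metric.ball x r, |u y - u x| / r) := by
    refine ⟨(L : ℝ), ?_⟩
    rintro _ ⟨y, rfl⟩
    exact term_le hL hr y
  have h1 : |u y - u x| / r ≤ ⨆ _ : y ∈ Metric.ball x r, |u y - u x| / r := by
    have hb2 : BddAbove (Set.range fun _ : y ∈ Metric.ball x r => |u y - u x| / r) := by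
      refine ⟨|u y - u x| / r, ?_⟩
      rintro _ ⟨_, rfl⟩
      exact le_rfl
    exact le_ciSup hb2 hy
  exact h1.trans (le_ciSup hb y)

lemma exists_of_lt (hr : 0 < r) (ha : a < g u r x) :
    ∃ y ∈ Metric.ball x r, a < |u y - u x| / r := by
  have : Nonempty X := ⟨x⟩
  obtain ⟨y, hy⟩ := exists_lt_of_lt_ciSup ha
  by_cases h : y ∈ Metric.ball x r
  · exact ⟨y, h, by rwa [ciSup_pos h] at hy⟩
  · refine ⟨x, mem_ball_self hr, ?_⟩
    have h0 : (⨆ _ : y ∈ Metric.ball x r, |u y - u x| / r) = 0 := by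
      have : IsEmpty (y ∈ Metric.ball x r) := ⟨h⟩
      exact Real.iSup_of_isEmpty _
    rw [h0] at hy
    simpa using hy.trans_le (by simp)

/-- Rational approximation from below, upper estimate. -/
lemma exists_rat_le_add (hL : LipschitzWith L u) (hr : 0 < r) (hε : 0 < ε) :
    ∃ q : ℚ, 0 < (q:ℝ) ∧ (q:ℝ) < r ∧ g u (q:ℝ) x ≤ g u r x + ε := by
  set δ : ℝ := min (r/2) (ε * r / (2*((L:ℝ)+1))) with hδdef
  have hδ0 : 0 < δ := by
    apply lt_min (by linarith)
    positivity
  obtain ⟨q, hq1, hq2⟩ := exists_rat_btwn (show r - δ < r by linarith)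
  have hδr : δ ≤ r/2 := min_le_left _ _
  have hδε : δ ≤ ε * r / (2*((L:ℝ)+1)) := min_le_right _ _
  have hq0 : 0 < (q:ℝ) := by linarith
  refine ⟨q, hq0, hq2, ?_⟩
  have hG0 : 0 ≤ g u r x := g_nonneg hr
  have hGL : g u r x ≤ (L : ℝ) := g_le hL hr
  refine Real.iSup_le (fun y => Real.iSup_le (fun hy => ?_) (by positivity)) (by positivity)
  have hyr : y ∈ Metric.ball x r := by
    rw [mem_ball] at hy ⊢
    linarith
  have ht : |u y - u x| ≤ g u r x * r := by
    have := le_g hL hr hyr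
    rwa [div_le_iff₀ hr] at this
  rw [div_le_iff₀ hq0]
  have hL0 : (0:ℝ) ≤ (L:ℝ) := L.coe_nonneg

  have hqhalf : r/2 ≤ (q:ℝ) := by linarith
  have h1 : r - (q:ℝ) ≤ δ := by linarith
  have h2 : g u r x * (r - (q:ℝ)) ≤ (L:ℝ) * δ :=
    mul_le_mul hGL h1 (by linarith) hL0
  have h3 : (L:ℝ) * δ ≤ ε * r / 2 := by
    have h4 : (L:ℝ) / ((L:ℝ)+1) ≤ 1 := by
      rw [div_le_one (by positivity)]
      linarith
    have h5 : (L:ℝ) * (ε * r / (2*((L:ℝ)+1))) = ((L:ℝ)/((L:ℝ)+1)) * (ε * r / 2) := by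
      have h2L : (2*((L:ℝ)+1)) ≠ 0 := by positivity
      have hL1 : ((L:ℝ)+1) ≠ 0 := by positivity
      field_simp
    have h6 : (L:ℝ) * δ ≤ (L:ℝ) * (ε * r / (2*((L:ℝ)+1))) :=
      mul_le_mul_of_nonneg_left hδε hL0
    have h7 : ((L:ℝ)/((L:ℝ)+1)) * (ε * r / 2) ≤ 1 * (ε * r / 2) :=
      mul_le_mul_of_nonneg_right h4 (by positivity)
    linarith [h5 ▸ h6]
  have h8 : ε * r / 2 ≤ ε * (q:ℝ) := by nlinarith
  have hring : g u r x * r = g u r x * (q:ℝ) + g u r x * (r - (q:ℝ)) := by ring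
  nlinarith

/-- Rational approximation from below, lower estimate. -/
lemma exists_rat_ge_sub (hL : LipschitzWith L u) (hr : 0 < r) (hε : 0 < ε) :
    ∃ q : ℚ, 0 < (q:ℝ) ∧ (q:ℝ) < r ∧ g u r x - ε ≤ g u ((q:ℚ):ℝ) x := by
  obtain ⟨y, hy, hlt⟩ := exists_of_lt hr (show g u r x - ε < g u r x by linarith)
  rw [mem_ball] at hy
  obtain ⟨q, hq1, hq2⟩ := exists_rat_btwn hy
  have hq0 : 0 < (q:ℝ) := lt_of_le_of_lt dist_nonneg hq1
  refine ⟨q, hq0, hq2, ?_⟩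
  have hyq : y ∈ Metric.ball x (q:ℝ) := mem_ball.mpr hq1
  have h1 : |u y - u x| / r ≤ |u y - u x| / (q:ℝ) :=
    div_le_div_of_nonneg_left (abs_nonneg _) hq0 hq2.le
  have h2 := le_g hL hq0 hyq
  linarith

lemma g_nonpos_eq (hr : r ≤ 0) : g u r = fun _ => (0:ℝ) := by
  funext x
  have hb : Metric.ball x r = ∅ := Metric.ball_eq_empty.2 hr
  simp [g, hb]

lemma g_lsc (hL : LipschitzWith L u) (hr : 0 < r) : LowerSemicontinuous (g u r) := by
  intro x a ha
  obtain ⟨y, hy, hlt⟩ := exists_of_lt hr ha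
  rw [Metric.mem_ball] at hy
  have hL0 : (0:ℝ) ≤ (L:ℝ) := L.coe_nonneg
  have har : a * r < |u y - u x| := (lt_div_iff₀ hr).mp hlt
  set c : ℝ := |u y - u x| - a * r with hc
  have hc0 : 0 < c := by simp only [hc]; linarith
  have hδ0 : 0 < min (r - dist y x) (c / ((L:ℝ)+1)) := lt_min (by linarith) (by positivity)
  filter_upwards [Metric.ball_mem_nhds x hδ0] with x' hx'
  rw [Metric.mem_ball] at hx'
  have hd1 : dist x' x < r - dist y x := lt_of_lt_of_le hx' (min_le_left _ _)
  have hd2 : dist x' x < c / ((L:ℝ)+1) := lt_of_lt_of_le hx' (min_le_right _ _)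
  have hyx' : y ∈ Metric.ball x' r := by
    rw [Metric.mem_ball]
    calc dist y x' ≤ dist y x + dist x x' := dist_triangle _ _ _
      _ = dist y x + dist x' x := by rw [dist_comm x x']
      _ < r := by linarith
  have hux : |u x' - u x| ≤ (L:ℝ) * dist x' x := by
    rw [← Real.dist_eq]
    exact hL.dist_le_mul x' x
  have hLd : (L:ℝ) * dist x' x < c := by
    have h1 : (L:ℝ) * dist x' x ≤ (L:ℝ) * (c / ((L:ℝ)+1)) :=
      mul_le_mul_of_nonneg_left hd2.le hL0
    have h2 : (L:ℝ) * (c / ((L:ℝ)+1)) < c := by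
      have he : (L:ℝ) * (c / ((L:ℝ)+1)) = ((L:ℝ)/((L:ℝ)+1)) * c := by ring
      have hlt1 : (L:ℝ)/((L:ℝ)+1) < 1 := (div_lt_one (by positivity)).mpr (by linarith)
      have := mul_lt_mul_of_pos_right hlt1 hc0
      rw [he]; linarith
    linarith
  have htri : |u y - u x| ≤ |u y - u x'| + |u x' - u x| := by
    calc |u y - u x| = |(u y - u x') + (u x' - u x)| := by ring_nf
      _ ≤ |u y - u x'| + |u x' - u x| := abs_add_le _ _
  have key : a * r < |u y - u x'| := by
    simp only [hc] at hLd
    linarith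
  have := le_g hL hr hyx'
  have : a < |u y - u x'| / r := (lt_div_iff₀ hr).mpr key
  linarith [le_g hL hr hyx']

variable [MeasurableSpace X] [BorelSpace X]

lemma g_meas (hL : LipschitzWith L u) (r : ℝ) : Measurable (g u r) := by
  rcases le_or_gt r 0 with hr | hr
  · rw [g_nonpos_eq hr]; exact measurable_const
  · exact (g_lsc hL hr).measurable

/-- The comap of `𝓝[>] 0` under the cast `ℚ → ℝ`. -/
def v : Filter ℚ := Filter.comap (fun q : ℚ => (q:ℝ)) (𝓝[>] (0:ℝ))

lemma v_neBot : (v).NeBot := by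
  apply Filter.comap_neBot
  intro t ht
  obtain ⟨δ, hδ, hsub⟩ := (nhdsGT_basis (0:ℝ)).mem_iff.mp ht
  obtain ⟨q, hq0, hqδ⟩ := exists_rat_btwn hδ
  exact ⟨q, hsub ⟨hq0, hqδ⟩⟩

lemma v_basis : (v).HasCountableBasis (fun _ : ℕ => True)
    (fun n => {q : ℚ | 0 < (q:ℝ) ∧ (q:ℝ) < 1/((n:ℝ)+1)}) := by
  have hB := (nhdsGT_basis (0:ℝ)).comap (fun q : ℚ => (q:ℝ))
  refine ⟨⟨fun t => ?_⟩, Set.to_countable _⟩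
  unfold v
  rw [hB.mem_iff]
  constructor
  · rintro ⟨δ, hδ, hsub⟩
    obtain ⟨n, hn⟩ := exists_nat_one_div_lt hδ
    refine ⟨n, trivial, fun q hq => hsub ?_⟩
    exact ⟨hq.1, hq.2.trans hn⟩
  · rintro ⟨n, -, hsub⟩
    refine ⟨1/((n:ℝ)+1), by positivity, fun q hq => hsub ⟨hq.1, hq.2⟩⟩

lemma liminf_eq (hL : LipschitzWith L u) (x : X) :
    Filter.liminf (fun r : ℝ => g u r x) (𝓝[>] (0:ℝ))
      = Filter.liminf (fun q : ℚ => g u (q:ℝ) x) v := by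
  haveI : (v).NeBot := v_neBot
  have hev_pos_r : ∀ᶠ r in 𝓝[>] (0:ℝ), 0 < r := eventually_mem_nhdsWithin
  have hev_pos_q : ∀ᶠ q : ℚ in v, 0 < (q:ℝ) := tendsto_comap.eventually hev_pos_r
  have hbr_le : Filter.IsBoundedUnder (· ≤ ·) (𝓝[>] (0:ℝ)) (fun r => g u r x) :=
    ⟨L, eventually_map.2 (hev_pos_r.mono fun r hr => g_le hL hr)⟩
  have hbr_ge : Filter.IsBoundedUnder (· ≥ ·) (𝓝[>] (0:ℝ)) (fun r => g u r x) :=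
    ⟨0, eventually_map.2 (hev_pos_r.mono fun r hr => g_nonneg hr)⟩
  have hbq_le : Filter.IsBoundedUnder (· ≤ ·) (v) (fun q : ℚ => g u (q:ℝ) x) :=
    ⟨L, eventually_map.2 (hev_pos_q.mono fun q hq => g_le hL hq)⟩
  have hbq_ge : Filter.IsBoundedUnder (· ≥ ·) (v) (fun q : ℚ => g u (q:ℝ) x) :=
    ⟨0, eventually_map.2 (hev_pos_q.mono fun q hq => g_nonneg hq)⟩
  apply le_antisymm
  · refine le_of_forall_lt_imp_le_of_dense fun a ha => ?_
    have hev := eventually_lt_of_lt_liminf ha hbr_ge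
    have h2 : ∀ᶠ q : ℚ in v, a ≤ g u (q:ℝ) x :=
      (tendsto_comap.eventually hev).mono fun q h => h.le
    exact le_liminf_of_le hbq_le.isCoboundedUnder_ge h2
  · refine le_of_forall_gt_imp_ge_of_dense fun a ha => ?_
    have hfr : ∃ᶠ r in 𝓝[>] (0:ℝ), g u r x < a :=
      frequently_lt_of_liminf_lt hbr_le.isCoboundedUnder_ge ha
    have hfq : ∃ᶠ q : ℚ in v, g u (q:ℝ) x ≤ a := by
      unfold v
      rw [((nhdsGT_basis (0:ℝ)).comap (fun q : ℚ => (q:ℝ))).frequently_iff]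
      intro δ hδ
      obtain ⟨r, hrmem, hra⟩ := (nhdsGT_basis (0:ℝ)).frequently_iff.mp hfr δ hδ
      obtain ⟨q, hq0, hqr, hqle⟩ :=
        exists_rat_le_add (x := x) hL hrmem.1 (show (0:ℝ) < (a - g u r x)/2 by linarith)
      exact ⟨q, ⟨hq0, hqr.trans hrmem.2⟩, by linarith⟩
    exact liminf_le_of_frequently_le hfq hbq_ge

lemma limsup_eq (hL : LipschitzWith L u) (x : X) :
    Filter.limsup (fun r : ℝ => g u r x) (𝓝[>] (0:ℝ))
      = Filter.limsup (fun q : ℚ => g u (q:ℝ) x) v := by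
  haveI : (v).NeBot := v_neBot
  have hev_pos_r : ∀ᶠ r in 𝓝[>] (0:ℝ), 0 < r := eventually_mem_nhdsWithin
  have hev_pos_q : ∀ᶠ q : ℚ in v, 0 < (q:ℝ) := tendsto_comap.eventually hev_pos_r
  have hbr_le : Filter.IsBoundedUnder (· ≤ ·) (𝓝[>] (0:ℝ)) (fun r => g u r x) :=
    ⟨L, eventually_map.2 (hev_pos_r.mono fun r hr => g_le hL hr)⟩
  have hbr_ge : Filter.IsBoundedUnder (· ≥ ·) (𝓝[>] (0:ℝ)) (fun r => g u r x) :=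
    ⟨0, eventually_map.2 (hev_pos_r.mono fun r hr => g_nonneg hr)⟩
  have hbq_le : Filter.IsBoundedUnder (· ≤ ·) (v) (fun q : ℚ => g u (q:ℝ) x) :=
    ⟨L, eventually_map.2 (hev_pos_q.mono fun q hq => g_le hL hq)⟩
  have hbq_ge : Filter.IsBoundedUnder (· ≥ ·) (v) (fun q : ℚ => g u (q:ℝ) x) :=
    ⟨0, eventually_map.2 (hev_pos_q.mono fun q hq => g_nonneg hq)⟩
  apply le_antisymm
  · refine le_of_forall_lt_imp_le_of_dense fun a ha => ?_
    have hfr : ∃ᶠ r in 𝓝[>] (0:ℝ), a < g u r x :=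
      frequently_lt_of_lt_limsup hbr_ge.isCoboundedUnder_le ha
    have hfq : ∃ᶠ q : ℚ in v, a ≤ g u (q:ℝ) x := by
      unfold v
      rw [((nhdsGT_basis (0:ℝ)).comap (fun q : ℚ => (q:ℝ))).frequently_iff]
      intro δ hδ
      obtain ⟨r, hrmem, hra⟩ := (nhdsGT_basis (0:ℝ)).frequently_iff.mp hfr δ hδ
      obtain ⟨q, hq0, hqr, hqge⟩ :=
        exists_rat_ge_sub (x := x) hL hrmem.1 (show (0:ℝ) < (g u r x - a)/2 by linarith)
      exact ⟨q, ⟨hq0, hqr.trans hrmem.2⟩, by linarith⟩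
    exact le_limsup_of_frequently_le hfq hbq_le
  · refine le_of_forall_gt_imp_ge_of_dense fun a ha => ?_
    have hev := eventually_lt_of_limsup_lt ha hbr_le
    have h2 : ∀ᶠ q : ℚ in v, g u (q:ℝ) x ≤ a :=
      (tendsto_comap.eventually hev).mono fun q h => h.le
    exact limsup_le_of_le hbq_ge.isCoboundedUnder_le h2

end LipAux

theorem lip_and_Lip_borel_measurable
    {X : Type*} [MetricSpace X] [MeasurableSpace X] [BorelSpace X]
    (u : X → ℝ) (hu : ∃ L : NNReal, LipschitzWith L u) :
    Measurable (lipLower u) ∧ Measurable (lipUpper u) := by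
  obtain ⟨L, hL⟩ := hu
  constructor
  · have heq : lipLower u = fun x => Filter.liminf (fun q : ℚ => LipAux.g u (q:ℝ) x) LipAux.v :=
      funext fun x => LipAux.liminf_eq hL x
    rw [heq]
    exact Measurable.liminf' (fun q => LipAux.g_meas hL (q:ℝ)) LipAux.v_basis
      (fun n => Set.to_countable _)
  · have heq : lipUpper u = fun x => Filter.limsup (fun q : ℚ => LipAux.g u (q:ℝ) x) LipAux.v :=
      funext fun x => LipAux.limsup_eq hL x
    rw [heq]
    exact Measurable.limsup' (fun q => LipAux.g_meas hL (q:ℝ)) LipAux.v_basis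
      (fun n => Set.to_countable _)
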